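/- Let p be real with 7/8 ≤ p ≤ 1. Then the sequence D_n(p)² converges to (8p−7)(4p−3)/(2p−1)⁴ as n → ∞. -/
import Mathlib
set_option maxHeartbeats 1000000

lemma certA_nonneg (X Y Z : ℝ) (hX : 0 ≤ X) (hY : 0 ≤ Y) (hZ : 0 ≤ Z) :
    (0:ℝ) ≤ (31/8) * X^1 * Y^1 * Z^1 + (1/2) * X^1 * Y^1 * Z^2 + (1/8) * X^1 * Y^2 * Z^1 + (27/16) * X^2 * Y^0 * Z^0 + (9/2) * X^2 * Y^0 * Z^1 + (3/1) * X^2 * Y^0 * Z^2 + (17/8) * X^2 * Y^1 * Z^0 + (3/16) * X^2 * Y^2 * Z^0 :=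
  add_nonneg (add_nonneg (add_nonneg (add_nonneg (add_nonneg (add_nonneg (add_nonneg (mul_nonneg (mul_nonneg (mul_nonneg (by norm_num) (pow_nonneg hX 1)) (pow_nonneg hY 1)) (pow_nonneg hZ 1)) (mul_nonneg (mul_nonneg (mul_nonneg (by norm_num) (pow_nonneg hX 1)) (pow_nonneg hY 1)) (pow_nonneg hZ 2))) (mul_nonneg (mul_nonneg (mul_nonneg (by norm_num) (pow_nonneg hX 1)) (pow_nonneg hY 2)) (pow_nonneg hZ 1))) (mul_nonneg (mul_nonneg (mul_nonneg (by norm_num) (pow_nonneg hX 2)) (pow_nonneg hY 0)) (pow_nonneg hZ 0))) (mul_nonneg (mul_nonneg (mul_nonneg (by norm_num) (pow_nonneg hX 2)) (pow_nonneg hY 0)) (pow_nonneg hZ 1))) (mul_nonneg (mul_nonneg (mul_nonneg (by norm_num) (pow_nonneg hX 2)) (pow_nonneg hY 0)) (pow_nonneg hZ 2))) (mul_nonneg (mul_nonneg (mul_nonneg (by norm_num) (pow_nonneg hX 2)) (pow_nonneg hY 1)) (pow_nonneg hZ 0))) (mul_nonneg (mul_nonneg (mul_nonneg (by norm_num) (pow_nonneg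 hX 2)) (pow_nonneg hY 2)) (pow_nonneg hZ 0))

lemma certB_nonneg (X Y Z : ℝ) (hX : 0 ≤ X) (hY : 0 ≤ Y) (hZ : 0 ≤ Z) :
    (0:ℝ) ≤ (6237/16384) * X^0 * Y^0 * Z^2 + (81/16) * X^0 * Y^0 * Z^3 + (12825/8192) * X^0 * Y^1 * Z^2 + (63/16) * X^0 * Y^1 * Z^3 + (15507/16384) * X^0 * Y^2 * Z^2 + (879/8192) * X^0 * Y^3 * Z^2 + (207/2048) * X^0 * Y^3 * Z^3 + (81/4096) * X^0 * Y^4 * Z^3 + (3/4096) * X^0 * Y^5 * Z^3 + (22221/8192) * X^1 * Y^0 * Z^1 + (27/4) * X^1 * Y^0 * Z^3 + (10881/4096) * X^1 * Y^1 * Z^1 + (5169/8192) * X^1 * Y^2 * Z^1 + (417/1024) * X^1 * Y^2 * Z^2 + (685/2048) * X^1 * Y^3 * Z^2 + (211/4096) * X^1 * Y^4 * Z^2 + (9/4096) * X^1 * Y^5 * Z^2 + (22977/16384) * X^2 * Y^0 * Z^0 + (13581/8192) * X^2 * Y^1 * Z^0 + (12303/16384) * X^2 * Y^2 * Z^0 +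 (417/1024) * X^2 * Y^2 * Z^1 + (683/4096) * X^2 * Y^3 * Z^0 + (239/1024) * X^2 * Y^3 * Z^1 + (335/16384) * X^2 * Y^4 * Z^0 + (65/2048) * X^2 * Y^4 * Z^1 + (13/8192) * X^2 * Y^5 * Z^0 + (3/2048) * X^2 * Y^5 * Z^1 + (1/16384) * X^2 * Y^6 * Z^0 :=
  add_nonneg (add_nonneg (add_nonneg (add_nonneg (add_nonneg (add_nonneg (add_nonneg (add_nonneg (add_nonneg (add_nonneg (add_nonneg (add_nonneg (add_nonneg (add_nonneg (add_nonneg (add_nonneg (add_nonneg (add_nonneg (add_nonneg (add_nonneg (add_nonneg (add_nonneg (add_nonneg (add_nonneg (add_nonneg (add_nonneg (add_nonneg (mul_nonneg (mul_nonneg (mul_nonneg (by norm_num) (pow_nonneg hX 0)) (pow_nonneg hY 0)) (pow_nonneg hZ 2)) (mul_nonneg (mul_nonneg (mul_nonneg (by norm_num) (pow_nonneg hX 0)) (pow_nonneg hY 0)) (pow_nonneg hZ 3))) (mul_nonneg (mul_nonneg (mul_nonneg (by norm_num) (pow_nonneg hX 0)) (pow_nonneg hY 1)) (pow_nonneg hZ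 2))) (mul_nonneg (mul_nonneg (mul_nonneg (by norm_num) (pow_nonneg hX 0)) (pow_nonneg hY 1)) (pow_nonneg hZ 3))) (mul_nonneg (mul_nonneg (mul_nonneg (by norm_num) (pow_nonneg hX 0)) (pow_nonneg hY 2)) (pow_nonneg hZ 2))) (mul_nonneg (mul_nonneg (mul_nonneg (by norm_num) (pow_nonneg hX 0)) (pow_nonneg hY 3)) (pow_nonneg hZ 2))) (mul_nonneg (mul_nonneg (mul_nonneg (by norm_num) (pow_nonneg hX 0)) (pow_nonneg hY 3)) (pow_nonneg hZ 3))) (mul_nonneg (mul_nonneg (mul_nonneg (by norm_num) (pow_nonneg hX 0)) (pow_nonneg hY 4)) (pow_nonneg hZ 3))) (mul_nonneg (mul_nonneg (mul_nonneg (by norm_num) (pow_nonneg hX 0)) (pow_nonneg hY 5)) (pow_nonneg hZ 3))) (mul_nonneg (mul_nonneg (mul_nonneg (by norm_num) (pow_nonneg hX 1)) (pow_nonneg hY 0)) (pow_nonneg hZ 1))) (mul_nonneg (mul_nonneg (mul_nonneg (by norm_num) (pow_nonneg hX 1)) (pow_nonneg hY 0)) (pow_nonneg hZ 3))) (mul_nonneg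 (mul_nonneg (mul_nonneg (by norm_num) (pow_nonneg hX 1)) (pow_nonneg hY 1)) (pow_nonneg hZ 1))) (mul_nonneg (mul_nonneg (mul_nonneg (by norm_num) (pow_nonneg hX 1)) (pow_nonneg hY 2)) (pow_nonneg hZ 1))) (mul_nonneg (mul_nonneg (mul_nonneg (by norm_num) (pow_nonneg hX 1)) (pow_nonneg hY 2)) (pow_nonneg hZ 2))) (mul_nonneg (mul_nonneg (mul_nonneg (by norm_num) (pow_nonneg hX 1)) (pow_nonneg hY 3)) (pow_nonneg hZ 2))) (mul_nonneg (mul_nonneg (mul_nonneg (by norm_num) (pow_nonneg hX 1)) (pow_nonneg hY 4)) (pow_nonneg hZ 2))) (mul_nonneg (mul_nonneg (mul_nonneg (by norm_num) (pow_nonneg hX 1)) (pow_nonneg hY 5)) (pow_nonneg hZ 2))) (mul_nonneg (mul_nonneg (mul_nonneg (by norm_num) (pow_nonneg hX 2)) (pow_nonneg hY 0)) (pow_nonneg hZ 0))) (mul_nonneg (mul_nonneg (mul_nonneg (by norm_num) (pow_nonneg hX 2)) (pow_nonneg hY 1)) (pow_nonneg hZ 0))) (mul_nonneg (mul_nonneg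 (mul_nonneg (by norm_num) (pow_nonneg hX 2)) (pow_nonneg hY 2)) (pow_nonneg hZ 0))) (mul_nonneg (mul_nonneg (mul_nonneg (by norm_num) (pow_nonneg hX 2)) (pow_nonneg hY 2)) (pow_nonneg hZ 1))) (mul_nonneg (mul_nonneg (mul_nonneg (by norm_num) (pow_nonneg hX 2)) (pow_nonneg hY 3)) (pow_nonneg hZ 0))) (mul_nonneg (mul_nonneg (mul_nonneg (by norm_num) (pow_nonneg hX 2)) (pow_nonneg hY 3)) (pow_nonneg hZ 1))) (mul_nonneg (mul_nonneg (mul_nonneg (by norm_num) (pow_nonneg hX 2)) (pow_nonneg hY 4)) (pow_nonneg hZ 0))) (mul_nonneg (mul_nonneg (mul_nonneg (by norm_num) (pow_nonneg hX 2)) (pow_nonneg hY 4)) (pow_nonneg hZ 1))) (mul_nonneg (mul_nonneg (mul_nonneg (by norm_num) (pow_nonneg hX 2)) (pow_nonneg hY 5)) (pow_nonneg hZ 0))) (mul_nonneg (mul_nonneg (mul_nonneg (by norm_num) (pow_nonneg hX 2)) (pow_nonneg hY 5)) (pow_nonneg hZ 1))) (mul_nonneg (mul_nonneg (mul_nonneg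 (by norm_num) (pow_nonneg hX 2)) (pow_nonneg hY 6)) (pow_nonneg hZ 0))


lemma aux_nonneg_of_mul (c x : ℝ) (hc : 0 < c) (h : 0 ≤ c * x) : 0 ≤ x := by
  by_contra h'
  push_neg at h'
  nlinarith [mul_pos hc (neg_pos.mpr h')]

lemma stepA (b w V : ℝ) (hb1 : 3/4 ≤ b) (hb2 : b ≤ 1) (hw : 3*b*w = 4*b - 3)
    (hwV : w ≤ V) (hV : V ≤ 1/3) :
    3*w^2 + 2*w ≤ (b*(4/3 - V))^2 * (3*V^2 + 2*w) := by
  have hb0 : (0:ℝ) < b := by linarith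
  have hX : (0:ℝ) ≤ (3*b*V - 4*b + 3)/3 := by
    have := mul_le_mul_of_nonneg_left hwV hb0.le
    linarith
  have hY : (0:ℝ) ≤ 4*b - 3 := by linarith
  have hZ : (0:ℝ) ≤ b*(1 - 3*V)/3 := by
    have h1 : (0:ℝ) ≤ 1 - 3*V := by linarith
    positivity
  have hS := certA_nonneg _ _ _ hX hY hZ
  have hid : b^2 * ((b*(4/3 - V))^2 * (3*V^2 + 2*w) - (3*w^2 + 2*w)) =
      (31/8) * ((3*b*V - 4*b + 3)/3)^1 * (4*b - 3)^1 * (b*(1 - 3*V)/3)^1 + (1/2) * ((3*b*V - 4*b + 3)/3)^1 * (4*b - 3)^1 * (b*(1 - 3*V)/3)^2 + (1/8) * ((3*b*V - 4*b + 3)/3)^1 * (4*b - 3)^2 * (b*(1 - 3*V)/3)^1 + (27/16) * ((3*b*V - 4*b + 3)/3)^2 * (4*b - 3)^0 * (b*(1 - 3*V)/3)^0 + (9/2) * ((3*b*V - 4*b + 3)/3)^2 * (4*b - 3)^0 * (b*(1 - 3*V)/3)^1 + (3/1) * ((3*b*V - 4*b + 3)/3)^2 * (4*b - 3)^0 * (b*(1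 - 3*V)/3)^2 + (17/8) * ((3*b*V - 4*b + 3)/3)^2 * (4*b - 3)^1 * (b*(1 - 3*V)/3)^0 + (3/16) * ((3*b*V - 4*b + 3)/3)^2 * (4*b - 3)^2 * (b*(1 - 3*V)/3)^0 := by
    linear_combination (1 - 2*b - b*w + (32/27)*b^3 - (16/9)*b^3*V + (2/3)*b^3*V^2) * hw
  have := aux_nonneg_of_mul (b^2) _ (pow_pos hb0 2) (hid ▸ hS)
  linarith

set_option maxHeartbeats 3200000 in
lemma stepB (b w V : ℝ) (hb1 : 3/4 ≤ b) (hb2 : b ≤ 1) (hw : 3*b*w = 4*b - 3)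
    (hwV : w ≤ V) (hV : V ≤ 1/3) :
    3*((b^2 - 3*V^2)/2)^2 + 2*w ≤ (b*(4/3 - V))^2 * b^2 := by
  have hb0 : (0:ℝ) < b := by linarith
  have hX : (0:ℝ) ≤ (3*b*V - 4*b + 3)/3 := by
    have := mul_le_mul_of_nonneg_left hwV hb0.le
    linarith
  have hY : (0:ℝ) ≤ 4*b - 3 := by linarith
  have hZ : (0:ℝ) ≤ b*(1 - 3*V)/3 := by
    have h1 : (0:ℝ) ≤ 1 - 3*V := by linarith
    positivity
  have hS := certB_nonneg _ _ _ hX hY hZ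
  have hid : b^4 * ((b*(4/3 - V))^2 * b^2 - (3*((b^2 - 3*V^2)/2)^2 + 2*w)) =
      (6237/16384) * ((3*b*V - 4*b + 3)/3)^0 * (4*b - 3)^0 * (b*(1 - 3*V)/3)^2 + (81/16) * ((3*b*V - 4*b + 3)/3)^0 * (4*b - 3)^0 * (b*(1 - 3*V)/3)^3 + (12825/8192) * ((3*b*V - 4*b + 3)/3)^0 * (4*b - 3)^1 * (b*(1 - 3*V)/3)^2 + (63/16) * ((3*b*V - 4*b + 3)/3)^0 * (4*b - 3)^1 * (b*(1 - 3*V)/3)^3 + (15507/16384) * ((3*b*V - 4*b + 3)/3)^0 * (4*b - 3)^2 * (b*(1 - 3*V)/3)^2 + (879/8192) * ((3*b*V - 4*b + 3)/3)^0 * (4*b - 3)^3 * (b*(1 - 3*V)/3)^2 + (207/2048) * ((3*b*V - 4*b + 3)/3)^0 * (4*b - 3)^3 * (b*(1 - 3*V)/3)^3 + (81/4096) * ((3*b*V - 4*b + 3)/3)^0 * (4*b - 3)^4 * (b*(1 - 3*V)/3)^3 + (3/4096) * ((3*b*V - 4*b + 3)/3)^0 * (4*b - 3)^5 * (b*(1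 - 3*V)/3)^3 + (22221/8192) * ((3*b*V - 4*b + 3)/3)^1 * (4*b - 3)^0 * (b*(1 - 3*V)/3)^1 + (27/4) * ((3*b*V - 4*b + 3)/3)^1 * (4*b - 3)^0 * (b*(1 - 3*V)/3)^3 + (10881/4096) * ((3*b*V - 4*b + 3)/3)^1 * (4*b - 3)^1 * (b*(1 - 3*V)/3)^1 + (5169/8192) * ((3*b*V - 4*b + 3)/3)^1 * (4*b - 3)^2 * (b*(1 - 3*V)/3)^1 + (417/1024) * ((3*b*V - 4*b + 3)/3)^1 * (4*b - 3)^2 * (b*(1 - 3*V)/3)^2 + (685/2048) * ((3*b*V - 4*b + 3)/3)^1 * (4*b - 3)^3 * (b*(1 - 3*V)/3)^2 + (211/4096) * ((3*b*V - 4*b + 3)/3)^1 * (4*b - 3)^4 * (b*(1 - 3*V)/3)^2 + (9/4096) * ((3*b*V - 4*b + 3)/3)^1 * (4*b - 3)^5 * (b*(1 - 3*V)/3)^2 + (22977/16384) * ((3*b*V - 4*b + 3)/3)^2 * (4*b - 3)^0 * (b*(1 - 3*V)/3)^0 + (13581/8192) * ((3*b*V - 4*b + 3)/3)^2 * (4*b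 - 3)^1 * (b*(1 - 3*V)/3)^0 + (12303/16384) * ((3*b*V - 4*b + 3)/3)^2 * (4*b - 3)^2 * (b*(1 - 3*V)/3)^0 + (417/1024) * ((3*b*V - 4*b + 3)/3)^2 * (4*b - 3)^2 * (b*(1 - 3*V)/3)^1 + (683/4096) * ((3*b*V - 4*b + 3)/3)^2 * (4*b - 3)^3 * (b*(1 - 3*V)/3)^0 + (239/1024) * ((3*b*V - 4*b + 3)/3)^2 * (4*b - 3)^3 * (b*(1 - 3*V)/3)^1 + (335/16384) * ((3*b*V - 4*b + 3)/3)^2 * (4*b - 3)^4 * (b*(1 - 3*V)/3)^0 + (65/2048) * ((3*b*V - 4*b + 3)/3)^2 * (4*b - 3)^4 * (b*(1 - 3*V)/3)^1 + (13/8192) * ((3*b*V - 4*b + 3)/3)^2 * (4*b - 3)^5 * (b*(1 - 3*V)/3)^0 + (3/2048) * ((3*b*V - 4*b + 3)/3)^2 * (4*b - 3)^5 * (b*(1 - 3*V)/3)^1 + (1/16384) * ((3*b*V - 4*b + 3)/3)^2 * (4*b - 3)^6 * (b*(1 - 3*V)/3)^0 := by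
    linear_combination (-(2/3)*b^3) * hw
  have := aux_nonneg_of_mul (b^4) _ (pow_pos hb0 4) (hid ▸ hS)
  linarith

open Filter

/-- For 7/8 ≤ p ≤ 1, D_n² converges to (8p-7)(4p-3)/(2p-1)⁴. -/
theorem fitch_Dsq_tendsto
    (p : ℝ) (C D : ℕ → ℝ)
    (hC0 : C 0 = 0) (hD0 : D 0 = 1)
    (hC : ∀ n, 2 * C (n + 1) =
        1 - 2 * C n + 3 * (C n) ^ 2 - (2 * p - 1) ^ 2 * (D n) ^ 2)
    (hD : ∀ n, D (n + 1) = (2 * p - 1) * (1 + C n) * D n)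
    (hp1 : 7 / 8 ≤ p) (hp2 : p ≤ 1) :
    Tendsto (fun n => (D n) ^ 2) atTop
      (nhds ((8 * p - 7) * (4 * p - 3) / (2 * p - 1) ^ 4)) := by
  set b : ℝ := 2 * p - 1 with hbdef
  have hb1 : 3/4 ≤ b := by rw [hbdef]; linarith
  have hb2 : b ≤ 1 := by rw [hbdef]; linarith
  have hb0 : (0:ℝ) < b := by linarith
  have hbne : b ≠ 0 := ne_of_gt hb0
  set w : ℝ := (4*b - 3) / (3*b) with hwdef
  have hw : 3*b*w = 4*b - 3 := by rw [hwdef]; field_simp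
  have hw0 : 0 ≤ w := by
    rw [hwdef]; exact div_nonneg (by linarith) (by linarith)
  have hw13 : w ≤ 1/3 := by
    rw [hwdef, div_le_iff₀ (by linarith : (0:ℝ) < 3*b)]; linarith
  have hwb : 4/3 - 1/b = w := by
    rw [hwdef]; field_simp
  clear_value w
  set v : ℕ → ℝ := fun n => 1/3 - C n with hvdef
  set e : ℕ → ℝ := fun n => b^2 * (D n)^2 with hedef
  have hv0 : v 0 = 1/3 := by rw [hvdef]; simp [hC0]
  have he0 : e 0 = b^2 := by rw [hedef]; simp [hD0]
  have hv : ∀ n, v (n+1) = (e n - 3 * (v n)^2) / 2 := by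
    intro n
    rw [hvdef, hedef]
    show 1/3 - C (n+1) = (b^2 * (D n)^2 - 3 * (1/3 - C n)^2) / 2
    rw [hbdef]
    linear_combination (-(1:ℝ)/2) * hC n
  have he : ∀ n, e (n+1) = (b * (4/3 - v n))^2 * e n := by
    intro n
    rw [hvdef, hedef]
    show b^2 * (D (n+1))^2 = (b * (4/3 - (1/3 - C n)))^2 * (b^2 * (D n)^2)
    rw [hD n, hbdef]
    ring
  have hD2 : (fun n => (D n)^2) = fun n => e n / b^2 := by
    funext n
    rw [hedef]
    field_simp
  clear_value v e
  clear_value b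
  -- the invariant region
  have inv : ∀ n, w ≤ v n ∧ v n ≤ 1/3 ∧ 3*(v n)^2 + 2*w ≤ e n ∧ e n ≤ b^2 := by
    intro n
    induction n with
    | zero =>
      refine ⟨by rw [hv0]; exact hw13, by rw [hv0], ?_, by rw [he0]⟩
      rw [hv0, he0]
      nlinarith [mul_nonneg (sq_nonneg (b-1)) (by linarith : (0:ℝ) ≤ b + 2), hw, hb0]
    | succ n ih =>
      obtain ⟨h1, h2, h3, h4⟩ := ih
      have hvn2 : w^2 ≤ (v n)^2 := by nlinarith
      have hkey2 : b^2 ≤ 2/3 + 3*w^2 := by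
        have hsq : 9*b^2*w^2 = (4*b-3)^2 := by linear_combination (3*b*w + 4*b - 3) * hw
        have hcube : 0 ≤ 3*(1-b)^3 * (b+3) := by
          apply mul_nonneg (mul_nonneg (by norm_num) (pow_nonneg (by linarith) 3)) (by linarith)
        have hid2 : 3*b^2*(2/3 + 3*w^2 - b^2) = 3*(1-b)^3 * (b+3) + (9*b^2*w^2 - (4*b-3)^2) := by
          ring
        have := aux_nonneg_of_mul (3*b^2) (2/3 + 3*w^2 - b^2) (by positivity)
          (by rw [hid2, hsq]; simpa using hcube)
        linarith
      have hmul : b * w ≤ b * (v n) := mul_le_mul_of_nonneg_left h1 hb0.le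
      have hbw : b * (4/3 - w) = 1 := by linear_combination (-(1:ℝ)/3) * hw
      have hr0 : 0 ≤ b * (4/3 - v n) := by nlinarith
      have hr1 : b * (4/3 - v n) ≤ 1 := by nlinarith
      have hr2 : (b * (4/3 - v n))^2 ≤ 1 := by nlinarith
      have he_nn : 0 ≤ e n := by nlinarith [sq_nonneg (v n)]
      refine ⟨?_, ?_, ?_, ?_⟩
      · rw [hv n]; linarith
      · rw [hv n]; nlinarith
      · rw [hv n, he n]
        have hA := stepA b w (v n) hb1 hb2 hw h1 h2
        have hB := stepB b w (v n) hb1 hb2 hw h1 h2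
        rcases eq_or_lt_of_le (by linarith : 3*(v n)^2 + 2*w ≤ b^2) with hlh | hlh
        · have hEeq : e n = 3*(v n)^2 + 2*w := by linarith
          rw [hEeq]
          nlinarith [hA]
        · have P1 : 0 ≤ (b^2 - e n) * ((b*(4/3 - v n))^2 * (3*(v n)^2 + 2*w) - (3*w^2 + 2*w)) :=
            mul_nonneg (by linarith) (by linarith)
          have P2 : 0 ≤ (e n - (3*(v n)^2 + 2*w)) * ((b*(4/3 - v n))^2 * b^2 - (3*((b^2 - 3*(v n)^2)/2)^2 + 2*w)) :=
            mul_nonneg (by linarith) (by linarith)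
          have P3 : 0 ≤ (e n - (3*(v n)^2 + 2*w)) * ((b^2 - e n) * (b^2 - (3*(v n)^2 + 2*w))) :=
            mul_nonneg (by linarith) (mul_nonneg (by linarith) (by linarith))
          have key : (b^2 - (3*(v n)^2 + 2*w)) *
              ((b*(4/3 - v n))^2 * e n - (3*((e n - 3*(v n)^2)/2)^2 + 2*w)) =
              (b^2 - e n) * ((b*(4/3 - v n))^2 * (3*(v n)^2 + 2*w) - (3*w^2 + 2*w))
              + (e n - (3*(v n)^2 + 2*w)) * ((b*(4/3 - v n))^2 * b^2 - (3*((b^2 - 3*(v n)^2)/2)^2 + 2*w))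
              + (3/4) * ((e n - (3*(v n)^2 + 2*w)) * ((b^2 - e n) * (b^2 - (3*(v n)^2 + 2*w)))) := by
            ring
          have := aux_nonneg_of_mul (b^2 - (3*(v n)^2 + 2*w)) _ (by linarith)
            (by rw [key]; linarith)
          linarith
      · rw [he n]
        nlinarith [mul_nonneg (sub_nonneg.mpr hr2) he_nn]
  -- e is antitone, converges to its infimum
  have he_nonneg : ∀ n, 0 ≤ e n := by
    intro n
    have := (inv n).2.2.1
    nlinarith [sq_nonneg (v n)]
  have hmono : ∀ n, e (n+1) ≤ e n := by
    intro n
    obtain ⟨h1, h2, h3, h4⟩ := inv n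
    have hmul : b * w ≤ b * (v n) := mul_le_mul_of_nonneg_left h1 hb0.le
    have hbw : b * (4/3 - w) = 1 := by linear_combination (-(1:ℝ)/3) * hw
    have hr0 : 0 ≤ b * (4/3 - v n) := by nlinarith
    have hr1 : b * (4/3 - v n) ≤ 1 := by nlinarith
    have hr2 : (b * (4/3 - v n))^2 ≤ 1 := by nlinarith
    rw [he n]
    nlinarith [mul_nonneg (sub_nonneg.mpr hr2) (he_nonneg n)]
  have hbdd : BddBelow (Set.range e) := by
    refine ⟨0, ?_⟩
    rintro y ⟨n, rfl⟩
    exact he_nonneg n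
  have hanti : Antitone e := antitone_nat_of_succ_le hmono
  set l : ℝ := ⨅ n, e n with hldef
  have hel : Tendsto e atTop (nhds l) := tendsto_atTop_ciInf hanti hbdd
  have hle : ∀ n, l ≤ e n := fun n => ciInf_le hbdd n
  have hl2w : 2*w ≤ l := by
    apply le_ciInf
    intro n
    have := (inv n).2.2.1
    nlinarith [sq_nonneg (v n)]
  clear_value l
  have hl0 : 0 ≤ l := by linarith
  -- the limit value
  have hlval : l = 2*w + 3*w^2 := by
    rcases eq_or_lt_of_le hl0 with hl | hl
    · have hweq : w = 0 := by linarith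
      rw [← hl, hweq]; ring
    · have hlne : l ≠ 0 := ne_of_gt hl
      have hene : ∀ n, e n ≠ 0 := fun n => ne_of_gt (lt_of_lt_of_le hl (hle n))
      have hshift : Tendsto (fun n => e (n+1)) atTop (nhds l) :=
        hel.comp (tendsto_add_atTop_nat 1)
      have hratio : Tendsto (fun n => e (n+1) / e n) atTop (nhds 1) := by
        have := hshift.div hel hlne
        rwa [div_self hlne] at this
      have hres : (fun n => e (n+1) / e n) = fun n => (b * (4/3 - v n))^2 := by
        funext n
        rw [he n, mul_div_assoc, div_self (hene n), mul_one]
      rw [hres] at hratio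
      have hrpos : ∀ n, 0 ≤ b * (4/3 - v n) := by
        intro n
        have := (inv n).2.1
        nlinarith
      have hr : Tendsto (fun n => b * (4/3 - v n)) atTop (nhds 1) := by
        have hsqrt := hratio.sqrt
        rw [Real.sqrt_one] at hsqrt
        have heq : (fun n => Real.sqrt ((b * (4/3 - v n))^2)) = fun n => b * (4/3 - v n) := by
          funext n
          exact Real.sqrt_sq (hrpos n)
        rwa [heq] at hsqrt
      have hvt : Tendsto v atTop (nhds w) := by
        have ht1 : Tendsto (fun n => 4/3 - (b * (4/3 - v n)) / b) atTop (nhds (4/3 - 1/b)) :=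
          tendsto_const_nhds.sub (hr.div_const b)
        have ht2 : (fun n => 4/3 - (b * (4/3 - v n)) / b) = v := by
          funext n
          field_simp
          ring
        rwa [ht2, hwb] at ht1
      have hvs : Tendsto (fun n => v (n+1)) atTop (nhds w) :=
        hvt.comp (tendsto_add_atTop_nat 1)
      have hvs2 : Tendsto (fun n => v (n+1)) atTop (nhds ((l - 3*w^2)/2)) := by
        have ht1 : Tendsto (fun n => (e n - 3*(v n)^2)/2) atTop (nhds ((l - 3*w^2)/2)) :=
          (hel.sub (((hvt.pow 2)).const_mul 3)).div_const 2
        have ht2 : (fun n => (e n - 3*(v n)^2)/2) = fun n => v (n+1) := by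
          funext n
          rw [hv n]
        rwa [ht2] at ht1
      have := tendsto_nhds_unique hvs hvs2
      linarith
  -- conclude
  have hfin : Tendsto (fun n => e n / b^2) atTop (nhds (l / b^2)) := hel.div_const (b^2)
  have hl2 : (2*w + 3*w^2) * b^2 = (4*b-3)*(2*b-1) := by
    linear_combination (b*w + 2*b - 1) * hw
  subst hbdef
  have hval : l / (2*p-1)^2 = (8 * p - 7) * (4 * p - 3) / (2 * p - 1) ^ 4 := by
    rw [hlval]
    rw [div_eq_div_iff (pow_ne_zero 2 hbne) (pow_ne_zero 4 hbne)]
    linear_combination (2*p-1)^2 * hl2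
  rw [hD2, ← hval]
  exact hfin
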